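/- There exists ω_∞ > 0 such that for all ω > ω_∞, the partition induced on any layer s by any globally optimal multilayer partition C_max^ω is a maximizer of the single-layer modularity problem defined on the summed modularity matrix Σ_{s=1}^{|T|} B_s; that is, C_max^ω|_s solves max_C Σ_{i,j=1}^N (Σ_{s=1}^{|T|} B_{ijs}) δ(c_i, c_j). -/

import Mathlib

open Finset

/-- Kronecker delta on community labels, as a real number. -/
noncomputable def kdelta (a b : ℕ) : ℝ := if a = b then 1 else 0

/-- Persistence between layers `s` and `s+1`: the number of nodes whose community
assignment is unchanged from layer `s` to layer `s+1`. -/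
def persAt (N : ℕ) (c : ℕ → Fin N → ℕ) (s : ℕ) : ℕ :=
  (Finset.univ.filter fun i : Fin N => c s i = c (s + 1) i).card

/-- Total persistence of a multilayer partition: `Pers(C) = Σ_{s=1}^{|T|-1} Σ_i δ(c_{i_s}, c_{i_{s+1}})`. -/
def pers (N T : ℕ) (c : ℕ → Fin N → ℕ) : ℕ :=
  ∑ s ∈ Finset.range (T - 1), persAt N c s

/-- Multilayer modularity quality function
`Q(C) = Σ_s Σ_{i,j} B_{ijs} δ(c_{i_s}, c_{j_s}) + 2 ω Pers(C)`. -/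
noncomputable def Q (N T : ℕ) (B : ℕ → Fin N → Fin N → ℝ) (ω : ℝ) (c : ℕ → Fin N → ℕ) : ℝ :=
  (∑ s ∈ Finset.range T, ∑ i : Fin N, ∑ j : Fin N, B s i j * kdelta (c s i) (c s j))
    + 2 * ω * (pers N T c : ℝ)

/-- A multilayer partition (given by its community-assignment function) is globally
optimal for inter-layer coupling `ω` if it maximizes the multilayer quality function. -/
def IsOptimal (N T : ℕ) (B : ℕ → Fin N → Fin N → ℝ) (ω : ℝ) (c : ℕ → Fin N → ℕ) : Prop :=
  ∀ c' : ℕ → Fin N → ℕ, Q N T B ω c' ≤ Q N T B ω c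

/-- Adjacency (nonzero weight) in the multilayer modularity matrix: intra-layer entries
`B_{ijs}` and ordinal diagonal uniform inter-layer coupling `ω` between consecutive layers. -/
def Adj (N T : ℕ) (B : ℕ → Fin N → Fin N → ℝ) (ω : ℝ) (p q : ℕ × Fin N) : Prop :=
  (p.1 = q.1 ∧ p.1 < T ∧ B p.1 p.2 q.2 ≠ 0) ∨
  (p.2 = q.2 ∧ ω ≠ 0 ∧ ((p.1 + 1 = q.1 ∧ q.1 < T) ∨ (q.1 + 1 = p.1 ∧ p.1 < T)))

/-- No community of the multilayer partition contains a component that is disconnected in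
the weighted graph whose adjacency matrix is the multilayer modularity matrix: any two
node-layer pairs in the same community are joined by a path staying inside that community. -/
def NoDisconnectedCommunities (N T : ℕ) (B : ℕ → Fin N → Fin N → ℝ) (ω : ℝ)
    (c : ℕ → Fin N → ℕ) : Prop :=
  ∀ p q : ℕ × Fin N, p.1 < T → q.1 < T → c p.1 p.2 = c q.1 q.2 →
    Relation.ReflTransGen
      (fun a b => Adj N T B ω a b ∧ c a.1 a.2 = c p.1 p.2 ∧ c b.1 b.2 = c p.1 p.2) p q

/-- Single-layer modularity quality for a matrix `M` and assignment `a`. -/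
noncomputable def Qsingle (N : ℕ) (M : Fin N → Fin N → ℝ) (a : Fin N → ℕ) : ℝ :=
  ∑ i : Fin N, ∑ j : Fin N, M i j * kdelta (a i) (a j)

lemma kdelta_nonneg (a b : ℕ) : 0 ≤ kdelta a b := by unfold kdelta; split <;> norm_num
lemma kdelta_le_one (a b : ℕ) : kdelta a b ≤ 1 := by unfold kdelta; split <;> norm_num

lemma intra_abs_le (N T : ℕ) (B : ℕ → Fin N → Fin N → ℝ) (c : ℕ → Fin N → ℕ) :
    |∑ s ∈ Finset.range T, ∑ i : Fin N, ∑ j : Fin N, B s i j * kdelta (c s i) (c s j)|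
      ≤ ∑ s ∈ Finset.range T, ∑ i : Fin N, ∑ j : Fin N, |B s i j| := by
  refine (Finset.abs_sum_le_sum_abs _ _).trans (Finset.sum_le_sum fun s _ => ?_)
  refine (Finset.abs_sum_le_sum_abs _ _).trans (Finset.sum_le_sum fun i _ => ?_)
  refine (Finset.abs_sum_le_sum_abs _ _).trans (Finset.sum_le_sum fun j _ => ?_)
  rw [abs_mul, abs_of_nonneg (kdelta_nonneg _ _)]
  nlinarith [kdelta_le_one (c s i) (c s j), kdelta_nonneg (c s i) (c s j), abs_nonneg (B s i j)]

lemma persAt_le (N : ℕ) (c : ℕ → Fin N → ℕ) (s : ℕ) : persAt N c s ≤ N := by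
  unfold persAt
  exact (Finset.card_filter_le _ _).trans (by simp)

lemma pers_le (N T : ℕ) (c : ℕ → Fin N → ℕ) : pers N T c ≤ N * (T - 1) := by
  unfold pers
  calc ∑ s ∈ Finset.range (T-1), persAt N c s ≤ ∑ s ∈ Finset.range (T-1), N :=
        Finset.sum_le_sum fun s _ => persAt_le N c s
    _ = N * (T - 1) := by simp [mul_comm]

lemma pers_uniform (N T : ℕ) (a : Fin N → ℕ) : pers N T (fun _ => a) = N * (T - 1) := by
  unfold pers persAt
  simp [mul_comm]

lemma Qsingle_sum (N T : ℕ) (B : ℕ → Fin N → Fin N → ℝ) (a : Fin N → ℕ) :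
    Qsingle N (fun i j => ∑ r ∈ Finset.range T, B r i j) a
      = ∑ s ∈ Finset.range T, ∑ i : Fin N, ∑ j : Fin N, B s i j * kdelta (a i) (a j) := by
  unfold Qsingle
  symm
  refine (Finset.sum_comm).trans ?_
  refine Finset.sum_congr rfl fun i _ => (Finset.sum_comm).trans ?_
  refine Finset.sum_congr rfl fun j _ => ?_
  rw [Finset.sum_mul]

lemma Q_uniform (N T : ℕ) (B : ℕ → Fin N → Fin N → ℝ) (ω : ℝ) (a : Fin N → ℕ) :
    Q N T B ω (fun _ => a)
      = Qsingle N (fun i j => ∑ r ∈ Finset.range T, B r i j) a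
        + 2 * ω * ((N * (T - 1) : ℕ) : ℝ) := by
  unfold Q
  rw [pers_uniform, Qsingle_sum]

lemma Qsingle_abs_le (N T : ℕ) (B : ℕ → Fin N → Fin N → ℝ) (a : Fin N → ℕ) :
    |Qsingle N (fun i j => ∑ r ∈ Finset.range T, B r i j) a|
      ≤ ∑ s ∈ Finset.range T, ∑ i : Fin N, ∑ j : Fin N, |B s i j| := by
  rw [Qsingle_sum]
  exact intra_abs_le N T B (fun _ => a)


/-- **Proposition 6.** There exists `ω_∞ > 0` such that for all `ω > ω_∞`, the partition
induced on any layer `s` by any globally optimal multilayer partition maximizes the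
single-layer modularity problem defined on the summed modularity matrix `Σ_s B_s`. -/
theorem large_coupling_layers_solve_summed_matrix
    (N T : ℕ)
    (B : ℕ → Fin N → Fin N → ℝ) :
    ∃ ωinf : ℝ, 0 < ωinf ∧ ∀ ω : ℝ, ωinf < ω →
      ∀ c : ℕ → Fin N → ℕ, IsOptimal N T B ω c →
        ∀ s : ℕ, s < T →
          ∀ a : Fin N → ℕ,
            Qsingle N (fun i j => ∑ r ∈ Finset.range T, B r i j) a ≤
            Qsingle N (fun i j => ∑ r ∈ Finset.range T, B r i j) (c s) := by
  classical
  have hK0 : 0 ≤ ∑ s ∈ Finset.range T, ∑ i : Fin N, ∑ j : Fin N, |B s i j| := by positivity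
  refine ⟨(∑ s ∈ Finset.range T, ∑ i : Fin N, ∑ j : Fin N, |B s i j|) + 1,
    by linarith, fun ω hω c hopt s hs a => ?_⟩
  have hω0 : (0:ℝ) < ω := by linarith
  -- Step A: full persistence
  have hpers : pers N T c = N * (T - 1) := by
    by_contra h
    have h1 : pers N T c + 1 ≤ N * (T - 1) :=
      Nat.succ_le_of_lt (lt_of_le_of_ne (pers_le N T c) h)
    have hP : (pers N T c : ℝ) + 1 ≤ ((N * (T - 1) : ℕ) : ℝ) := by exact_mod_cast h1
    have key := hopt (fun _ => c 0)
    rw [Q_uniform] at key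
    unfold Q at key
    have b1 := abs_le.mp (intra_abs_le N T B c)
    have b2 := abs_le.mp (Qsingle_abs_le N T B (c 0))
    nlinarith [mul_nonneg (by linarith : (0:ℝ) ≤ 2 * ω)
      (by linarith : (0:ℝ) ≤ ((N * (T - 1) : ℕ) : ℝ) - (pers N T c : ℝ) - 1)]
  -- Step B: constant across layers
  have hstep : ∀ k, k < T - 1 → ∀ i, c k i = c (k + 1) i := by
    have hsum : ∑ k ∈ Finset.range (T - 1), persAt N c k
        = ∑ k ∈ Finset.range (T - 1), N := by
      have := hpers
      unfold pers at this
      rw [this]; simp [mul_comm]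
    have hall := (Finset.sum_eq_sum_iff_of_le
      (fun k _ => persAt_le N c k)).mp hsum
    intro k hk i
    have hA : persAt N c k = N := hall k (Finset.mem_range.mpr hk)
    have huniv : (Finset.univ.filter fun i : Fin N => c k i = c (k + 1) i)
        = Finset.univ := Finset.eq_univ_of_card _ (by simpa [persAt] using hA)
    have hmem : i ∈ Finset.univ.filter fun i : Fin N => c k i = c (k + 1) i := by
      rw [huniv]; exact Finset.mem_univ i
    exact (Finset.mem_filter.mp hmem).2
  have hconst : ∀ s', s' < T → ∀ i, c s' i = c 0 i := by
    intro s'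
    induction s' with
    | zero => intro _ _; rfl
    | succ n ih =>
      intro hn i
      have h1 : c (n + 1) i = c n i := (hstep n (by omega) i).symm
      rw [h1, ih (by omega) i]
  -- Step C/D: compare with uniform partition
  have key := hopt (fun _ => a)
  rw [Q_uniform] at key
  unfold Q at key
  have hintra : ∑ r ∈ Finset.range T, ∑ i : Fin N, ∑ j : Fin N,
      B r i j * kdelta (c r i) (c r j)
      = Qsingle N (fun i j => ∑ r ∈ Finset.range T, B r i j) (c 0) := by
    rw [Qsingle_sum]
    refine Finset.sum_congr rfl fun r hr => ?_
    refine Finset.sum_congr rfl fun i _ => Finset.sum_congr rfl fun j _ => ?_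
    rw [hconst r (Finset.mem_range.mp hr) i, hconst r (Finset.mem_range.mp hr) j]
  have hcs : Qsingle N (fun i j => ∑ r ∈ Finset.range T, B r i j) (c s)
      = Qsingle N (fun i j => ∑ r ∈ Finset.range T, B r i j) (c 0) := by
    unfold Qsingle
    exact Finset.sum_congr rfl fun i _ => Finset.sum_congr rfl fun j _ => by
      rw [hconst s hs i, hconst s hs j]
  rw [hcs]
  rw [hintra, hpers] at key
  linarith
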